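/- Let B(t,x;{231,321}) = Σ_{n≥0} B_n(t;{231,321}) x^n be the formal power series in x, with coefficients in the polynomial ring ℤ[t], where B_n(t;{231,321}) = Σ_{π ∈ S_n({231,321})} t^{bdes(π)}. Then (1 − 2x + (1−t)x³) · B(t,x;{231,321}) = 1 − x as an identity of formal power series in (ℤ[t])[[x]]. -/

import Mathlib

open scoped Classical

/-- A permutation `π` of `Fin n` contains the pattern `σ` (a permutation of `Fin m`)
if some subsequence of the one-line notation of `π` standardizes to `σ`. -/
def Contains {n m : ℕ} (π : Equiv.Perm (Fin n)) (σ : Equiv.Perm (Fin m)) : Prop :=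
  ∃ f : Fin m → Fin n, StrictMono f ∧ ∀ a b : Fin m, σ a < σ b ↔ π (f a) < π (f b)

/-- `π` avoids the pattern `σ`. -/
def Avoids {n m : ℕ} (π : Equiv.Perm (Fin n)) (σ : Equiv.Perm (Fin m)) : Prop :=
  ¬ Contains π σ

/-- The pattern 123 (identity, in 0-indexed one-line notation `[0,1,2]`). -/
def perm123 : Equiv.Perm (Fin 3) := 1

/-- The pattern 132 (0-indexed one-line notation `[0,2,1]`). -/
def perm132 : Equiv.Perm (Fin 3) := ⟨![0, 2, 1], ![0, 2, 1], by decide, by decide⟩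

/-- The pattern 213 (0-indexed one-line notation `[1,0,2]`). -/
def perm213 : Equiv.Perm (Fin 3) := ⟨![1, 0, 2], ![1, 0, 2], by decide, by decide⟩

/-- The pattern 231 (0-indexed one-line notation `[1,2,0]`). -/
def perm231 : Equiv.Perm (Fin 3) := ⟨![1, 2, 0], ![2, 0, 1], by decide, by decide⟩

/-- The pattern 312 (0-indexed one-line notation `[2,0,1]`). -/
def perm312 : Equiv.Perm (Fin 3) := ⟨![2, 0, 1], ![1, 2, 0], by decide, by decide⟩

/-- The pattern 321 (0-indexed one-line notation `[2,1,0]`). -/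
def perm321 : Equiv.Perm (Fin 3) := ⟨![2, 1, 0], ![2, 1, 0], by decide, by decide⟩

/-- The number of big descents of `π`: 0-indexed positions `k` with `π k > π (k+1) + 1`. -/
def bdes {n : ℕ} (π : Equiv.Perm (Fin n)) : ℕ :=
  ((Finset.range n).filter fun k =>
    ∃ hk : k + 1 < n, (π ⟨k + 1, hk⟩ : ℕ) + 1 < (π ⟨k, Nat.lt_of_succ_lt hk⟩ : ℕ)).card

/-- The generating function `B(t,x;{231,321}) = Σ_n Σ_{π ∈ S_n({231,321})} t^{bdes π} x^n`,
as a formal power series in `x` with coefficients in `ℤ[t]`. -/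
noncomputable def B231321 : PowerSeries (Polynomial ℤ) :=
  PowerSeries.mk fun n =>
    ∑ π ∈ Finset.univ.filter
      (fun π : Equiv.Perm (Fin n) => Avoids π perm231 ∧ Avoids π perm321),
      Polynomial.X ^ bdes π


open Finset Equiv

/-! ### Auxiliary development -/

/-- The polynomial coefficients of `B231321`. -/
noncomputable def bpoly (n : ℕ) : Polynomial ℤ :=
  ∑ π ∈ Finset.univ.filter
      (fun π : Equiv.Perm (Fin n) => Avoids π perm231 ∧ Avoids π perm321),
    Polynomial.X ^ bdes π

lemma coeff_B231321 (n : ℕ) : PowerSeries.coeff n B231321 = bpoly n := by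
  simp [B231321, bpoly]

lemma card_filter_apply_lt {n : ℕ} (π : Equiv.Perm (Fin n)) (x : Fin n) :
    (Finset.univ.filter fun p => π p < x).card = (x : ℕ) := by
  have h : (Finset.univ.filter fun p => π p < x) = (Finset.Iio x).image π.symm := by
    ext p
    simp only [Finset.mem_filter, Finset.mem_univ, true_and, Finset.mem_image,
      Finset.mem_Iio]
    constructor
    · exact fun h => ⟨π p, h, by simp⟩
    · rintro ⟨v, hv, rfl⟩; simpa using hv
  rw [h, Finset.card_image_of_injective _ π.symm.injective, Fin.card_Iio]

lemma card_filter_val_le {n m : ℕ} :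
    (Finset.univ.filter fun p : Fin n => (p : ℕ) ≤ m).card ≤ m + 1 := by
  have h := Finset.card_le_card_of_injOn
    (s := Finset.univ.filter fun p : Fin n => (p : ℕ) ≤ m)
    (t := Finset.range (m+1)) (fun p : Fin n => (p : ℕ))
    (fun p hp => by
      simp only [Finset.coe_filter, Finset.mem_coe, Finset.mem_filter, Finset.mem_univ, true_and, Set.mem_setOf_eq] at hp
      simp only [Finset.coe_range, Finset.mem_coe, Finset.mem_range, Set.mem_Iio]
      omega)
    (fun a _ b _ hab => Fin.ext hab)
  calc (Finset.univ.filter fun p : Fin n => (p : ℕ) ≤ m).card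
      ≤ (Finset.range (m+1)).card := h
    _ = m + 1 := Finset.card_range _

lemma exists_two {n : ℕ} (π : Equiv.Perm (Fin n)) (k : Fin n)
    (h : (π k : ℕ) + 2 ≤ (k : ℕ)) :
    ∃ i j : Fin n, i < j ∧ j < k ∧ π k < π i ∧ π k < π j := by
  set s := Finset.univ.filter (fun p : Fin n => p < k ∧ π k < π p) with hs
  have hcard : 2 ≤ s.card := by
    set A := Finset.univ.filter (fun p : Fin n => p < k ∧ π p < π k) with hA
    have hsub : Finset.Iio k ⊆ A ∪ s := by
      intro p hp
      have hpk : p < k := Finset.mem_Iio.mp hp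
      have hne : π p ≠ π k := fun hc => absurd (π.injective hc) (Fin.ne_of_lt hpk)
      rcases lt_or_gt_of_ne hne with h1 | h1
      · exact Finset.mem_union_left _ (Finset.mem_filter.mpr ⟨Finset.mem_univ _, hpk, h1⟩)
      · exact Finset.mem_union_right _ (Finset.mem_filter.mpr ⟨Finset.mem_univ _, hpk, h1⟩)
    have hAcard : A.card ≤ (π k : ℕ) := by
      have : A ⊆ Finset.univ.filter (fun p : Fin n => π p < π k) :=
        fun p hp => Finset.mem_filter.mpr ⟨Finset.mem_univ _, (Finset.mem_filter.mp hp).2.2⟩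
      calc A.card ≤ _ := Finset.card_le_card this
        _ = (π k : ℕ) := card_filter_apply_lt π (π k)
    have h1 : (k : ℕ) ≤ A.card + s.card := by
      calc (k : ℕ) = (Finset.Iio k).card := (Fin.card_Iio k).symm
        _ ≤ (A ∪ s).card := Finset.card_le_card hsub
        _ ≤ A.card + s.card := Finset.card_union_le _ _
    omega
  obtain ⟨a, ha, b, hb, hab⟩ := Finset.one_lt_card.mp hcard
  rw [hs, Finset.mem_filter] at ha hb
  rcases lt_or_gt_of_ne hab with h1 | h1
  · exact ⟨a, b, h1, hb.2.1, ha.2.2, hb.2.2⟩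
  · exact ⟨b, a, h1, ha.2.1, hb.2.2, ha.2.2⟩

lemma not_two {n : ℕ} (π : Equiv.Perm (Fin n)) (hA : ∀ k : Fin n, (k : ℕ) ≤ (π k : ℕ) + 1)
    (i j k : Fin n) (hij : i < j) (hjk : j < k) (hi : π k < π i) (hj : π k < π j) :
    False := by
  set c := (π k : ℕ) with hc
  set A := Finset.univ.filter (fun p : Fin n => π p < π k) with hA'
  have hiA : i ∉ A := by
    simp only [hA', Finset.mem_filter, Finset.mem_univ, true_and]
    exact asymm hi
  have hjA : j ∉ A := by
    simp only [hA', Finset.mem_filter, Finset.mem_univ, true_and]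
    exact asymm hj
  have hkA : k ∉ A := by
    simp only [hA', Finset.mem_filter, Finset.mem_univ, true_and]
    exact lt_irrefl _
  have hcardA : A.card = c := card_filter_apply_lt π (π k)
  set B := insert i (insert j (insert k A)) with hB
  have hBcard : B.card = c + 3 := by
    rw [hB, Finset.card_insert_of_notMem, Finset.card_insert_of_notMem,
      Finset.card_insert_of_notMem hkA, hcardA]
    · simp only [Finset.mem_insert]
      push_neg
      exact ⟨Fin.ne_of_lt hjk, hjA⟩
    · simp only [Finset.mem_insert]
      push_neg
      exact ⟨Fin.ne_of_lt hij, Fin.ne_of_lt (hij.trans hjk), hiA⟩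
  have hBsub : B ⊆ Finset.univ.filter (fun p : Fin n => (p : ℕ) ≤ c + 1) := by
    intro p hp
    simp only [Finset.mem_filter, Finset.mem_univ, true_and]
    have hkc : (k : ℕ) ≤ c + 1 := hA k
    simp only [hB, Finset.mem_insert] at hp
    rcases hp with rfl | rfl | rfl | hp
    · have : (p : ℕ) < (j : ℕ) := hij
      have : (j : ℕ) < (k : ℕ) := hjk
      omega
    · have : (p : ℕ) < (k : ℕ) := hjk
      omega
    · exact hkc
    · simp only [hA', Finset.mem_filter, Finset.mem_univ, true_and] at hp
      have h1 := hA p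
      have h2 : (π p : ℕ) < c := hp
      omega
  have := (Finset.card_le_card hBsub).trans card_filter_val_le
  omega

lemma contains_of_two {n : ℕ} (π : Equiv.Perm (Fin n)) (i j k : Fin n)
    (hij : i < j) (hjk : j < k) (hi : π k < π i) (hj : π k < π j) :
    Contains π perm231 ∨ Contains π perm321 := by
  rcases lt_trichotomy (π i) (π j) with h1 | h1 | h1
  · left
    refine ⟨![i, j, k], ?_, ?_⟩
    · intro a b hab
      fin_cases a <;> fin_cases b
      · exact absurd hab (by decide)
      · exact hij
      · exact hij.trans hjk
      · exact absurd hab (by decide)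
      · exact absurd hab (by decide)
      · exact hjk
      · exact absurd hab (by decide)
      · exact absurd hab (by decide)
      · exact absurd hab (by decide)
    · intro a b
      fin_cases a <;> fin_cases b
      · exact iff_of_false (by decide) (lt_irrefl _)
      · exact iff_of_true (by decide) h1
      · exact iff_of_false (by decide) (asymm hi)
      · exact iff_of_false (by decide) (asymm h1)
      · exact iff_of_false (by decide) (lt_irrefl _)
      · exact iff_of_false (by decide) (asymm hj)
      · exact iff_of_true (by decide) hi
      · exact iff_of_true (by decide) hj
      · exact iff_of_false (by decide) (lt_irrefl _)
  · exact absurd (π.injective h1) (Fin.ne_of_lt hij)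
  · right
    refine ⟨![i, j, k], ?_, ?_⟩
    · intro a b hab
      fin_cases a <;> fin_cases b
      · exact absurd hab (by decide)
      · exact hij
      · exact hij.trans hjk
      · exact absurd hab (by decide)
      · exact absurd hab (by decide)
      · exact hjk
      · exact absurd hab (by decide)
      · exact absurd hab (by decide)
      · exact absurd hab (by decide)
    · intro a b
      fin_cases a <;> fin_cases b
      · exact iff_of_false (by decide) (lt_irrefl _)
      · exact iff_of_false (by decide) (asymm h1)
      · exact iff_of_false (by decide) (asymm hi)
      · exact iff_of_true (by decide) h1
      · exact iff_of_false (by decide) (lt_irrefl _)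
      · exact iff_of_false (by decide) (asymm hj)
      · exact iff_of_true (by decide) hi
      · exact iff_of_true (by decide) hj
      · exact iff_of_false (by decide) (lt_irrefl _)

/-- characterization of `{231,321}`-avoiders -/
lemma avoids_iff {n : ℕ} (π : Equiv.Perm (Fin n)) :
    (Avoids π perm231 ∧ Avoids π perm321) ↔ ∀ k : Fin n, (k : ℕ) ≤ (π k : ℕ) + 1 := by
  constructor
  · rintro ⟨h231, h321⟩ k
    by_contra hk
    push_neg at hk
    obtain ⟨i, j, hij, hjk, hi, hj⟩ := exists_two π k (by omega)
    rcases contains_of_two π i j k hij hjk hi hj with h | h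
    · exact h231 h
    · exact h321 h
  · intro hA
    constructor <;> rintro ⟨f, hf, hcond⟩
    · -- 231 : σ = ![1,2,0]
      have h02 := (hcond 2 0).mpr
      have h20 := (hcond 2 0).mp
      have c1 : π (f 2) < π (f 0) := by
        have := (hcond 2 0).mp (by decide)
        exact this
      have c2 : π (f 2) < π (f 1) := (hcond 2 1).mp (by decide)
      exact not_two π hA (f 0) (f 1) (f 2) (hf (by decide)) (hf (by decide)) c1 c2
    · have c1 : π (f 2) < π (f 0) := (hcond 2 0).mp (by decide)
      have c2 : π (f 2) < π (f 1) := (hcond 2 1).mp (by decide)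
      exact not_two π hA (f 0) (f 1) (f 2) (hf (by decide)) (hf (by decide)) c1 c2

/-- structure lemma: if `π` is an avoider with `π 0 = c` then `π k = k - 1` for `1 ≤ k ≤ c`. -/
lemma struct_small {n : ℕ} (π : Equiv.Perm (Fin (n+1))) (hA : ∀ k : Fin (n+1), (k : ℕ) ≤ (π k : ℕ) + 1)
    (c : ℕ) (h0 : (π 0 : ℕ) = c) :
    ∀ k : Fin (n+1), 1 ≤ (k : ℕ) → (k : ℕ) ≤ c → (π k : ℕ) = (k : ℕ) - 1 := by
  have hcn : c < n + 1 := h0 ▸ (π 0).isLt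
  suffices H : ∀ j : ℕ, ∀ k : Fin (n+1), (k : ℕ) = j → 1 ≤ j → j ≤ c → (π k : ℕ) = j - 1 by
    intro k h1 h2
    rw [H (k : ℕ) k rfl h1 h2]
  intro j
  induction j using Nat.strong_induction_on with
  | _ j IH =>
    intro k hkj h1 h2
    set p := π.symm ⟨j - 1, by omega⟩ with hp
    have hπp : π p = ⟨j - 1, by omega⟩ := π.apply_symm_apply _
    have hbound : (p : ℕ) ≤ j := by
      have := hA p
      rw [hπp] at this
      simp only at this
      omega
    rcases Nat.lt_or_ge (p : ℕ) j with hlt | hge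
    · exfalso
      rcases Nat.eq_zero_or_pos (p : ℕ) with hz | hpos
      · have : p = 0 := Fin.ext hz
        rw [this] at hπp
        have : (π 0 : ℕ) = j - 1 := by rw [hπp]
        omega
      · have := IH (p : ℕ) hlt p rfl hpos (by omega)
        rw [hπp] at this
        simp only at this
        omega
    · have hpj : (p : ℕ) = j := le_antisymm hbound hge
      have : k = p := Fin.ext (by omega)
      rw [this, hπp]

lemma struct_large {n : ℕ} (π : Equiv.Perm (Fin (n+1))) (hA : ∀ k : Fin (n+1), (k : ℕ) ≤ (π k : ℕ) + 1)
    (c : ℕ) (h0 : (π 0 : ℕ) = c) :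
    ∀ k : Fin (n+1), c + 1 ≤ (k : ℕ) → c + 1 ≤ (π k : ℕ) := by
  have hcn : c < n + 1 := h0 ▸ (π 0).isLt
  intro k hk
  by_contra hcon
  push_neg at hcon
  rcases Nat.lt_or_ge (π k : ℕ) c with hlt | hge
  · -- π k = v < c, but value v sits at position v + 1 ≤ c
    have hs := struct_small π hA c h0 ⟨(π k : ℕ) + 1, by omega⟩ (by simp) (by simp; omega)
    simp only at hs
    have : π ⟨(π k : ℕ) + 1, by omega⟩ = π k := Fin.ext (by omega)
    have := π.injective this
    have : ((⟨(π k : ℕ) + 1, by omega⟩ : Fin (n+1)) : ℕ) = (k : ℕ) := congrArg Fin.val this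
    simp only at this
    omega
  · -- π k = c = π 0, so k = 0
    have hπk : (π k : ℕ) = c := by omega
    have : π k = π 0 := Fin.ext (by rw [hπk, h0])
    have := π.injective this
    have : (k : ℕ) = 0 := by rw [this]; rfl
    omega

/-- inserting a block of size `c+1` in front of a permutation: the underlying function -/
def blockInsFun {n : ℕ} (c : ℕ) (hc : c ≤ n) (σ : Equiv.Perm (Fin (n - c))) :
    Fin (n + 1) → Fin (n + 1) := fun k =>
  if h : (k : ℕ) < c + 1 then
    ⟨if (k : ℕ) = 0 then c else (k : ℕ) - 1, by split <;> omega⟩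
  else
    ⟨(σ ⟨(k : ℕ) - (c+1), by omega⟩ : ℕ) + (c+1), by
      have := (σ ⟨(k : ℕ) - (c+1), by omega⟩).isLt; omega⟩

lemma blockInsFun_injective {n : ℕ} (c : ℕ) (hc : c ≤ n) (σ : Equiv.Perm (Fin (n - c))) :
    Function.Injective (blockInsFun c hc σ) := by
  intro a b hab
  have hv : (blockInsFun c hc σ a : ℕ) = (blockInsFun c hc σ b : ℕ) := congrArg Fin.val hab
  unfold blockInsFun at hv
  by_cases ha : (a : ℕ) < c + 1 <;> by_cases hb : (b : ℕ) < c + 1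
  · rw [dif_pos ha, dif_pos hb] at hv
    simp only at hv
    apply Fin.ext
    split at hv <;> split at hv <;> omega
  · rw [dif_pos ha, dif_neg hb] at hv
    simp only at hv
    have := (σ ⟨(b : ℕ) - (c+1), by omega⟩).isLt
    split at hv <;> omega
  · rw [dif_neg ha, dif_pos hb] at hv
    simp only at hv
    have := (σ ⟨(a : ℕ) - (c+1), by omega⟩).isLt
    split at hv <;> omega
  · rw [dif_neg ha, dif_neg hb] at hv
    simp only at hv
    have h2 : σ ⟨(a : ℕ) - (c+1), by omega⟩ = σ ⟨(b : ℕ) - (c+1), by omega⟩ :=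
      Fin.ext (by omega)
    have h3 := σ.injective h2
    have h4 : (a : ℕ) - (c+1) = (b : ℕ) - (c+1) := congrArg Fin.val h3
    apply Fin.ext
    omega

/-- inserting a block of size `c+1` in front of a permutation -/
noncomputable def blockIns {n : ℕ} (c : ℕ) (hc : c ≤ n) (σ : Equiv.Perm (Fin (n - c))) :
    Equiv.Perm (Fin (n + 1)) :=
  Equiv.ofBijective _ (Finite.injective_iff_bijective.mp (blockInsFun_injective c hc σ))

lemma blockIns_apply_lt {n : ℕ} (c : ℕ) (hc : c ≤ n) (σ : Equiv.Perm (Fin (n - c)))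
    (k : Fin (n+1)) (h : (k : ℕ) < c + 1) :
    (blockIns c hc σ k : ℕ) = if (k : ℕ) = 0 then c else (k : ℕ) - 1 := by
  show (blockInsFun c hc σ k : ℕ) = _
  unfold blockInsFun
  rw [dif_pos h]

lemma blockIns_apply_ge {n : ℕ} (c : ℕ) (hc : c ≤ n) (σ : Equiv.Perm (Fin (n - c)))
    (k : Fin (n+1)) (h : ¬ ((k : ℕ) < c + 1)) :
    (blockIns c hc σ k : ℕ) = (σ ⟨(k : ℕ) - (c+1), by omega⟩ : ℕ) + (c+1) := by
  show (blockInsFun c hc σ k : ℕ) = _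
  unfold blockInsFun
  rw [dif_neg h]

/-- restriction of an avoider with `π 0 = c` to positions after its first block -/
noncomputable def restrictPerm {n : ℕ} (c : ℕ) (hc : c ≤ n) (π : Equiv.Perm (Fin (n+1)))
    (h3 : ∀ k : Fin (n+1), c + 1 ≤ (k : ℕ) → c + 1 ≤ (π k : ℕ)) :
    Equiv.Perm (Fin (n - c)) :=
  Equiv.ofBijective (fun b : Fin (n - c) =>
    (⟨(π ⟨(b : ℕ) + (c+1), by omega⟩ : ℕ) - (c+1), by
      have h1 := (π ⟨(b : ℕ) + (c+1), by omega⟩).isLt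
      have h2 := h3 ⟨(b : ℕ) + (c+1), by omega⟩ (by simp)
      omega⟩ : Fin (n - c)))
    (Finite.injective_iff_bijective.mp (by
      intro a b hab
      have hv : _ = _ := congrArg Fin.val hab
      simp only at hv
      have h2a := h3 ⟨(a : ℕ) + (c+1), by omega⟩ (by simp)
      have h2b := h3 ⟨(b : ℕ) + (c+1), by omega⟩ (by simp)
      have : π ⟨(a : ℕ) + (c+1), by omega⟩ = π ⟨(b : ℕ) + (c+1), by omega⟩ :=
        Fin.ext (by omega)
      have := π.injective this
      have : (a : ℕ) + (c+1) = (b : ℕ) + (c+1) := congrArg Fin.val this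
      exact Fin.ext (by omega)))

lemma blockIns_apply_lt' {n : ℕ} (c : ℕ) (hc : c ≤ n) (σ : Equiv.Perm (Fin (n - c)))
    (k : Fin (n+1)) (v : ℕ) (hkv : (k : ℕ) = v) (hv : v < c + 1) :
    (blockIns c hc σ k : ℕ) = if v = 0 then c else v - 1 := by
  subst hkv
  exact blockIns_apply_lt c hc σ k hv

lemma blockIns_apply_ge' {n : ℕ} (c : ℕ) (hc : c ≤ n) (σ : Equiv.Perm (Fin (n - c)))
    (k : Fin (n+1)) (x : ℕ) (hx : x < n - c) (hkx : (k : ℕ) = c + 1 + x) :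
    (blockIns c hc σ k : ℕ) = (σ ⟨x, hx⟩ : ℕ) + (c+1) := by
  rw [blockIns_apply_ge c hc σ k (by omega)]
  have e : (⟨(k : ℕ) - (c+1), by omega⟩ : Fin (n - c)) = ⟨x, hx⟩ :=
    Fin.ext (by simp only [Fin.val_mk]; omega)
  rw [e]

lemma restrictPerm_apply {n : ℕ} (c : ℕ) (hc : c ≤ n) (π : Equiv.Perm (Fin (n+1)))
    (h3 : ∀ k : Fin (n+1), c + 1 ≤ (k : ℕ) → c + 1 ≤ (π k : ℕ)) (b : Fin (n - c)) :
    (restrictPerm c hc π h3 b : ℕ) = (π ⟨(b : ℕ) + (c+1), by omega⟩ : ℕ) - (c+1) := rfl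

attribute [irreducible] blockIns restrictPerm

lemma bdes_eq_sum {n : ℕ} (π : Equiv.Perm (Fin n)) :
    bdes π = ∑ k ∈ Finset.range n,
      if (∃ hk : k + 1 < n, (π ⟨k+1, hk⟩ : ℕ) + 1 < (π ⟨k, Nat.lt_of_succ_lt hk⟩ : ℕ))
      then 1 else 0 :=
  Finset.card_filter _ _

/-- big-descent count of a block insertion -/
lemma bdes_blockIns {n : ℕ} (c : ℕ) (hc : c ≤ n) (σ : Equiv.Perm (Fin (n - c))) :
    bdes (blockIns c hc σ) = bdes σ + (if 2 ≤ c then 1 else 0) := by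
  rw [bdes_eq_sum, bdes_eq_sum]
  rw [Finset.range_eq_Ico,
    ← Finset.sum_Ico_consecutive _ (Nat.zero_le (c+1)) (by omega : c + 1 ≤ n + 1),
    ← Finset.range_eq_Ico, Finset.sum_Ico_eq_sum_range]
  have hfirst : ∑ k ∈ Finset.range (c+1),
      (if (∃ hk : k + 1 < n + 1,
        (blockIns c hc σ ⟨k+1, hk⟩ : ℕ) + 1 < (blockIns c hc σ ⟨k, Nat.lt_of_succ_lt hk⟩ : ℕ))
      then (1:ℕ) else 0) = if 2 ≤ c then 1 else 0 := by
    have h0 : ∀ k ∈ Finset.range (c+1), k ≠ 0 →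
        (if (∃ hk : k + 1 < n + 1,
          (blockIns c hc σ ⟨k+1, hk⟩ : ℕ) + 1
            < (blockIns c hc σ ⟨k, Nat.lt_of_succ_lt hk⟩ : ℕ))
        then (1:ℕ) else 0) = 0 := by
      intro k hk hk0
      rw [if_neg]
      rintro ⟨hlt, hbig⟩
      have hkc : k < c + 1 := Finset.mem_range.mp hk
      have ha := blockIns_apply_lt' c hc σ ⟨k, Nat.lt_of_succ_lt hlt⟩ k rfl hkc
      rw [if_neg hk0] at ha
      by_cases h2 : k + 1 < c + 1
      · have hb := blockIns_apply_lt' c hc σ ⟨k+1, hlt⟩ (k+1) rfl h2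
        rw [if_neg (by omega : ¬ (k + 1 = 0))] at hb
        omega
      · have hb := blockIns_apply_ge' c hc σ ⟨k+1, hlt⟩ (k + 1 - (c+1)) (by omega)
          (by omega : k + 1 = c + 1 + (k + 1 - (c+1)))
        have := (σ ⟨k + 1 - (c+1), by omega⟩).isLt
        omega
    rw [Finset.sum_eq_single_of_mem 0 (Finset.mem_range.mpr (by omega)) h0]
    by_cases h2 : 2 ≤ c
    · rw [if_pos, if_pos h2]
      have hn1 : 0 + 1 < n + 1 := by omega
      refine ⟨hn1, ?_⟩
      have ha := blockIns_apply_lt' c hc σ ⟨0+1, hn1⟩ 1 rfl (by omega)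
      have hb := blockIns_apply_lt' c hc σ ⟨0, Nat.lt_of_succ_lt hn1⟩ 0 rfl (by omega)
      rw [if_neg (by omega : ¬ (1 = 0))] at ha
      rw [if_pos rfl] at hb
      omega
    · rw [if_neg h2, if_neg]
      rintro ⟨hlt, hbig⟩
      have ha := blockIns_apply_lt' c hc σ ⟨0, Nat.lt_of_succ_lt hlt⟩ 0 rfl (by omega)
      rw [if_pos rfl] at ha
      by_cases h1 : 0 + 1 < c + 1
      · have hb := blockIns_apply_lt' c hc σ ⟨0+1, hlt⟩ 1 rfl (by omega)
        rw [if_neg (by omega : ¬ (1 = 0))] at hb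
        omega
      · have hb := blockIns_apply_ge' c hc σ ⟨0+1, hlt⟩ (0 + 1 - (c+1)) (by omega)
          (by omega : 0 + 1 = c + 1 + (0 + 1 - (c+1)))
        omega
  have hsecond : ∀ x ∈ Finset.range (n + 1 - (c + 1)),
      (if (∃ hk : (c + 1 + x) + 1 < n + 1,
        (blockIns c hc σ ⟨c+1+x+1, hk⟩ : ℕ) + 1
          < (blockIns c hc σ ⟨c+1+x, Nat.lt_of_succ_lt hk⟩ : ℕ))
      then (1:ℕ) else 0)
      = (if (∃ hk : x + 1 < n - c, (σ ⟨x+1, hk⟩ : ℕ) + 1 < (σ ⟨x, Nat.lt_of_succ_lt hk⟩ : ℕ))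
        then (1:ℕ) else 0) := by
    intro x hx
    have hx' : x < n - c := by
      have := Finset.mem_range.mp hx
      omega
    congr 1
    apply propext
    constructor
    · rintro ⟨hlt, hbig⟩
      refine ⟨by omega, ?_⟩
      have ha := blockIns_apply_ge' c hc σ ⟨c+1+x+1, hlt⟩ (x+1) (by omega)
        (by omega : c+1+x+1 = c + 1 + (x+1))
      have hb := blockIns_apply_ge' c hc σ ⟨c+1+x, Nat.lt_of_succ_lt hlt⟩ x (by omega)
        (by omega : c+1+x = c + 1 + x)
      omega
    · rintro ⟨hlt, hbig⟩
      have hn1 : (c + 1 + x) + 1 < n + 1 := by omega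
      refine ⟨hn1, ?_⟩
      have ha := blockIns_apply_ge' c hc σ ⟨c+1+x+1, hn1⟩ (x+1) (by omega)
        (by omega : c+1+x+1 = c + 1 + (x+1))
      have hb := blockIns_apply_ge' c hc σ ⟨c+1+x, Nat.lt_of_succ_lt hn1⟩ x (by omega)
        (by omega : c+1+x = c + 1 + x)
      omega
  rw [hfirst, Finset.sum_congr rfl hsecond]
  have hnc : n + 1 - (c + 1) = n - c := by omega
  rw [hnc]
  omega

lemma restrictPerm_apply' {n : ℕ} (c : ℕ) (hc : c ≤ n) (π : Equiv.Perm (Fin (n+1)))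
    (h3 : ∀ k : Fin (n+1), c + 1 ≤ (k : ℕ) → c + 1 ≤ (π k : ℕ)) (b : Fin (n - c))
    (k : Fin (n+1)) (hk : (k : ℕ) = (b : ℕ) + (c+1)) :
    (restrictPerm c hc π h3 b : ℕ) = (π k : ℕ) - (c+1) := by
  rw [restrictPerm_apply]
  have e : (⟨(b : ℕ) + (c+1), by omega⟩ : Fin (n+1)) = k :=
    Fin.ext (by simp only [Fin.val_mk]; omega)
  rw [e]

lemma blockIns_restrictPerm {n : ℕ} (c : ℕ) (hc : c ≤ n) (π : Equiv.Perm (Fin (n+1)))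
    (hA : ∀ k : Fin (n+1), (k : ℕ) ≤ (π k : ℕ) + 1) (h0 : (π 0 : ℕ) = c)
    (h3 : ∀ k : Fin (n+1), c + 1 ≤ (k : ℕ) → c + 1 ≤ (π k : ℕ)) :
    blockIns c hc (restrictPerm c hc π h3) = π := by
  apply Equiv.ext
  intro k
  apply Fin.ext
  by_cases h : (k : ℕ) < c + 1
  · rw [blockIns_apply_lt' c hc _ k (k : ℕ) rfl h]
    by_cases h0' : (k : ℕ) = 0
    · rw [if_pos h0']
      have : k = 0 := Fin.ext (by simpa using h0')
      rw [this, h0]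
    · rw [if_neg h0']
      exact (struct_small π hA c h0 k (by omega) (by omega)).symm
  · rw [blockIns_apply_ge' c hc _ k ((k : ℕ) - (c+1)) (by omega) (by omega)]
    rw [restrictPerm_apply' c hc π h3 _ k (by simp only [Fin.val_mk]; omega)]
    have := h3 k (by omega)
    omega

lemma restrictPerm_blockIns {n : ℕ} (c : ℕ) (hc : c ≤ n) (σ : Equiv.Perm (Fin (n - c)))
    (h3 : ∀ k : Fin (n+1), c + 1 ≤ (k : ℕ) → c + 1 ≤ (blockIns c hc σ k : ℕ)) :
    restrictPerm c hc (blockIns c hc σ) h3 = σ := by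
  apply Equiv.ext
  intro b
  apply Fin.ext
  rw [restrictPerm_apply' c hc _ h3 b ⟨(b : ℕ) + (c+1), by omega⟩ (by simp only [Fin.val_mk])]
  rw [blockIns_apply_ge' c hc σ ⟨(b : ℕ) + (c+1), by omega⟩ (b : ℕ) (by omega)
    (by simp only [Fin.val_mk]; omega)]
  have e : (⟨(b : ℕ), by omega⟩ : Fin (n - c)) = b := Fin.ext rfl
  rw [e]
  omega

lemma blockIns_avoids {n : ℕ} (c : ℕ) (hc : c ≤ n) (σ : Equiv.Perm (Fin (n - c)))
    (hσ : ∀ x : Fin (n - c), (x : ℕ) ≤ (σ x : ℕ) + 1) :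
    ∀ k : Fin (n+1), (k : ℕ) ≤ (blockIns c hc σ k : ℕ) + 1 := by
  intro k
  by_cases h : (k : ℕ) < c + 1
  · rw [blockIns_apply_lt' c hc σ k (k : ℕ) rfl h]
    split <;> omega
  · rw [blockIns_apply_ge' c hc σ k ((k : ℕ) - (c+1)) (by omega) (by omega)]
    have := hσ ⟨(k : ℕ) - (c+1), by omega⟩
    simp only [Fin.val_mk] at this
    omega

lemma blockIns_zero {n : ℕ} (c : ℕ) (hc : c ≤ n) (σ : Equiv.Perm (Fin (n - c))) :
    (blockIns c hc σ 0 : ℕ) = c := by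
  rw [blockIns_apply_lt' c hc σ 0 0 (Fin.val_zero _) (by omega), if_pos rfl]

lemma blockIns_large {n : ℕ} (c : ℕ) (hc : c ≤ n) (σ : Equiv.Perm (Fin (n - c))) :
    ∀ k : Fin (n+1), c + 1 ≤ (k : ℕ) → c + 1 ≤ (blockIns c hc σ k : ℕ) := by
  intro k hk
  rw [blockIns_apply_ge' c hc σ k ((k : ℕ) - (c+1)) (by omega) (by omega)]
  omega

set_option maxHeartbeats 2000000 in
/-- the key fiberwise sum -/
lemma fiber_sum {n : ℕ} (c : ℕ) (hc : c ≤ n) :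
    ∑ π ∈ Finset.univ.filter
        (fun π : Equiv.Perm (Fin (n+1)) =>
          (Avoids π perm231 ∧ Avoids π perm321) ∧ (π 0 : ℕ) = c),
      (Polynomial.X : Polynomial ℤ) ^ bdes π
    = (if c ≤ 1 then 1 else Polynomial.X) * bpoly (n - c) := by
  rw [show bpoly (n - c) = ∑ σ ∈ Finset.univ.filter
      (fun σ : Equiv.Perm (Fin (n - c)) => Avoids σ perm231 ∧ Avoids σ perm321),
      Polynomial.X ^ bdes σ from rfl, Finset.mul_sum]
  refine Finset.sum_bij'
    (fun π hπ => restrictPerm c hc π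
      (struct_large π ((avoids_iff π).mp (Finset.mem_filter.mp hπ).2.1) c
        (Finset.mem_filter.mp hπ).2.2))
    (fun σ _ => blockIns c hc σ) ?_ ?_ ?_ ?_ ?_
  · -- maps into target
    intro π hπ
    obtain ⟨-, hA', h0⟩ := Finset.mem_filter.mp hπ
    have hA := (avoids_iff π).mp hA'
    refine Finset.mem_filter.mpr ⟨Finset.mem_univ _, (avoids_iff _).mpr ?_⟩
    intro b
    rw [restrictPerm_apply' c hc π _ b ⟨(b : ℕ) + (c+1), by omega⟩ (by simp only [Fin.val_mk])]
    have h1 := hA ⟨(b : ℕ) + (c+1), by omega⟩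
    have h2 := struct_large π hA c h0 ⟨(b : ℕ) + (c+1), by omega⟩
      (by simp only [Fin.val_mk]; omega)
    simp only [Fin.val_mk] at h1 h2
    omega
  · -- blockIns maps into fiber
    intro σ hσ
    have hσA := (avoids_iff σ).mp (Finset.mem_filter.mp hσ).2
    refine Finset.mem_filter.mpr ⟨Finset.mem_univ _,
      (avoids_iff _).mpr (blockIns_avoids c hc σ hσA), blockIns_zero c hc σ⟩
  · -- left inverse
    intro π hπ
    obtain ⟨-, hA', h0⟩ := Finset.mem_filter.mp hπ
    exact blockIns_restrictPerm c hc π ((avoids_iff π).mp hA') h0 _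
  · -- right inverse
    intro σ hσ
    exact restrictPerm_blockIns c hc σ _
  · -- the weights
    intro π hπ
    obtain ⟨-, hA', h0⟩ := Finset.mem_filter.mp hπ
    have hA := (avoids_iff π).mp hA'
    have hb : bdes π = bdes (restrictPerm c hc π (struct_large π hA c h0))
        + (if 2 ≤ c then 1 else 0) := by
      conv_lhs => rw [← blockIns_restrictPerm c hc π hA h0 (struct_large π hA c h0)]
      exact bdes_blockIns c hc _
    rw [hb, pow_add]
    by_cases h2 : 2 ≤ c
    · rw [if_pos h2, if_neg (by omega : ¬ (c ≤ 1)), pow_one, mul_comm]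
    · rw [if_neg h2, if_pos (by omega : c ≤ 1), pow_zero, mul_one, one_mul]

lemma key_recurrence (n : ℕ) :
    bpoly (n + 1) = ∑ c ∈ Finset.range (n + 1),
      (if c ≤ 1 then 1 else Polynomial.X) * bpoly (n - c) := by
  rw [show bpoly (n+1) = ∑ π ∈ Finset.univ.filter
      (fun π : Equiv.Perm (Fin (n+1)) => Avoids π perm231 ∧ Avoids π perm321),
      Polynomial.X ^ bdes π from rfl]
  rw [← Finset.sum_fiberwise_of_maps_to
    (g := fun π : Equiv.Perm (Fin (n+1)) => ((π 0 : Fin (n+1)) : ℕ))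
    (fun π _ => Finset.mem_range.mpr (π 0).isLt)]
  refine Finset.sum_congr rfl fun c hc => ?_
  have hc' : c ≤ n := Nat.lt_succ_iff.mp (Finset.mem_range.mp hc)
  rw [← fiber_sum c hc', Finset.filter_filter]

lemma bdes_eq_zero_of_le_one {n : ℕ} (h : n ≤ 1) (π : Equiv.Perm (Fin n)) : bdes π = 0 := by
  unfold bdes
  rw [Finset.card_eq_zero, Finset.filter_eq_empty_iff]
  intro k hk
  rintro ⟨h1, -⟩
  simp only [Finset.mem_range] at hk
  omega

lemma avoids_of_card_lt {n : ℕ} (h : n < 3) (π : Equiv.Perm (Fin n)) (σ : Equiv.Perm (Fin 3)) :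
    Avoids π σ := by
  rintro ⟨f, hf, -⟩
  have := Fintype.card_le_of_injective f hf.injective
  simp only [Fintype.card_fin] at this
  omega

lemma bpoly_small {n : ℕ} (h : n ≤ 1) : bpoly n = Fintype.card (Equiv.Perm (Fin n)) := by
  unfold bpoly
  rw [Finset.filter_true_of_mem
    (fun π _ => ⟨avoids_of_card_lt (by omega) π _, avoids_of_card_lt (by omega) π _⟩)]
  rw [Finset.sum_congr rfl (fun π _ => by rw [bdes_eq_zero_of_le_one h π, pow_zero])]
  simp [Finset.card_univ]

lemma bpoly_zero : bpoly 0 = 1 := by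
  rw [bpoly_small (by omega)]
  simp

lemma bpoly_one : bpoly 1 = 1 := by
  rw [bpoly_small (by omega)]
  simp

lemma history (m : ℕ) :
    bpoly (m + 2) = bpoly (m + 1) + bpoly m
      + Polynomial.X * ∑ j ∈ Finset.range m, bpoly j := by
  have hk := key_recurrence (m + 1)
  rw [show m + 1 + 1 = m + 2 from rfl, Finset.sum_range_succ', Finset.sum_range_succ'] at hk
  have hc : ∀ x ∈ Finset.range m,
      (if x + 1 + 1 ≤ 1 then (1 : Polynomial ℤ) else Polynomial.X) * bpoly (m + 1 - (x + 1 + 1))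
        = Polynomial.X * bpoly (m - 1 - x) := by
    intro x hx
    rw [if_neg (by omega), show m + 1 - (x + 1 + 1) = m - 1 - x from by omega]
  rw [Finset.sum_congr rfl hc, ← Finset.mul_sum, Finset.sum_range_reflect] at hk
  norm_num at hk
  rw [hk]
  ring

lemma three_term (n : ℕ) :
    bpoly (n + 3) = 2 * bpoly (n + 2) - bpoly n + Polynomial.X * bpoly n := by
  have h1 := history (n + 1)
  have h2 := history n
  rw [Finset.sum_range_succ] at h1
  simp only [show n+1+2 = n+3 from rfl, show n+1+1 = n+2 from rfl] at h1
  linear_combination h1 - h2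

/-- `(1 − 2x + (1−t)x³) · B(t,x;{231,321}) = 1 − x`. -/
theorem genfun_avoids231_321 :
    letI X : PowerSeries (Polynomial ℤ) := PowerSeries.X
    letI T : PowerSeries (Polynomial ℤ) := PowerSeries.C (R := Polynomial ℤ) Polynomial.X
    (1 - 2 * X + (1 - T) * X ^ 3) * B231321 = 1 - X := by
  show ((1 : PowerSeries (Polynomial ℤ)) - 2 * PowerSeries.X
      + (1 - PowerSeries.C (R := Polynomial ℤ) Polynomial.X) * PowerSeries.X ^ 3) * B231321
    = 1 - PowerSeries.X
  have expand : ((1 : PowerSeries (Polynomial ℤ)) - 2 * PowerSeries.X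
      + (1 - PowerSeries.C (R := Polynomial ℤ) Polynomial.X) * PowerSeries.X ^ 3) * B231321
      = B231321 - (PowerSeries.X ^ 1 * B231321) - (PowerSeries.X ^ 1 * B231321)
        + PowerSeries.X ^ 3 * B231321
        - PowerSeries.C (R := Polynomial ℤ) Polynomial.X * (PowerSeries.X ^ 3 * B231321) := by
    ring
  rw [expand]
  refine PowerSeries.ext fun n => ?_
  have hb2 : bpoly 2 = 2 := by
    have := history 0
    simp [bpoly_zero, bpoly_one] at this
    rw [this]; ring
  simp only [map_sub, map_add, PowerSeries.coeff_X_pow_mul', PowerSeries.coeff_C_mul,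
    coeff_B231321, PowerSeries.coeff_one, PowerSeries.coeff_X]
  match n with
  | 0 => norm_num [bpoly_zero]
  | 1 => norm_num [bpoly_zero, bpoly_one]
  | 2 => norm_num [bpoly_one, hb2]
  | (n + 3) =>
    have h3 : ¬ (n + 3 = 0) := by omega
    have h4 : ¬ (n + 3 = 1) := by omega
    rw [if_pos (by omega : 1 ≤ n + 3), if_pos (by omega : 3 ≤ n + 3), if_neg h3, if_neg h4]
    have ht := three_term n
    have e1 : n + 3 - 1 = n + 2 := by omega
    have e2 : n + 3 - 3 = n := by omega
    rw [e1, e2]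
    linear_combination ht
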